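/- In the finite discounted MDP setting with positivity, the direct method error is controlled by the Bellman residual: for any function q̂ : 𝒮×𝒜 → ℝ, |E_{s∼p_e^{(1)}}[q̂(s, π^e)] − J(γ)| ≤ (1−γ)^{−1} (E_{p_b}[μ*(s,a)²])^{1/2} · (E_{p_b}[((𝓑q̂)(s,a) − q̂(s,a))²])^{1/2}, where q̂(s, π^e) = Σ_{a∈𝒜} π^e(a|s) q̂(s,a) and (𝓑q̂)(s,a) = E[r + γ q̂(s′, π^e) | s,a] is the Bellman operator applied to q̂ under the kernel p(s′,r|s,a). -/

import Mathlib

open Finset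

lemma summable_geom_mul {γ : ℝ} (hγ0 : 0 ≤ γ) (hγ1 : γ < 1) {x : ℕ → ℝ} {C : ℝ}
    (hx : ∀ n, |x n| ≤ C) : Summable (fun n => γ ^ n * x n) := by
  refine Summable.of_norm_bounded
    ((summable_geometric_of_lt_one hγ0 hγ1).mul_left C) (fun n => ?_)
  rw [Real.norm_eq_abs, abs_mul, abs_pow, abs_of_nonneg hγ0, mul_comm]
  exact mul_le_mul_of_nonneg_right (hx n) (pow_nonneg hγ0 n)

lemma weighted_cs {ι : Type*} [Fintype ι] (w f g : ι → ℝ) (hw : ∀ i, 0 ≤ w i) :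
    |∑ i, w i * f i * g i| ≤
      Real.sqrt (∑ i, w i * f i ^ 2) * Real.sqrt (∑ i, w i * g i ^ 2) := by
  have key : ∀ (f g : ι → ℝ), ∑ i, w i * f i * g i ≤
      Real.sqrt (∑ i, w i * f i ^ 2) * Real.sqrt (∑ i, w i * g i ^ 2) := by
    intro f g
    have h := Real.sum_mul_le_sqrt_mul_sqrt (univ : Finset ι)
      (fun i => Real.sqrt (w i) * f i) (fun i => Real.sqrt (w i) * g i)
    have e1 : ∀ i : ι, (Real.sqrt (w i) * f i) * (Real.sqrt (w i) * g i) = w i * f i * g i := by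
      intro i
      rw [show (Real.sqrt (w i) * f i) * (Real.sqrt (w i) * g i)
          = (Real.sqrt (w i) * Real.sqrt (w i)) * (f i * g i) from by ring,
        Real.mul_self_sqrt (hw i)]
      ring
    have e2 : ∀ (f : ι → ℝ) (i : ι), (Real.sqrt (w i) * f i) ^ 2 = w i * f i ^ 2 := by
      intro f i
      rw [mul_pow, Real.sq_sqrt (hw i)]
    simp only [e1, e2] at h
    exact h
  rcases le_or_gt 0 (∑ i, w i * f i * g i) with h1 | h1
  · rw [abs_of_nonneg h1]; exact key f g
  · rw [abs_of_neg h1]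
    have h := key (fun i => -f i) g
    have e3 : ∑ i, w i * -f i * g i = -∑ i, w i * f i * g i := by
      rw [← Finset.sum_neg_distrib]
      exact Finset.sum_congr rfl fun i _ => by ring
    have e4 : ∑ i, w i * (-f i) ^ 2 = ∑ i, w i * f i ^ 2 :=
      Finset.sum_congr rfl fun i _ => by ring
    rw [e3, e4] at h
    exact h

theorem mdp_direct_method_bellman_residual_bound
    {S A R : Type} [Fintype S] [Fintype A] [Fintype R]
    (rval : R → ℝ) (γ : ℝ) (hγ0 : 0 ≤ γ) (hγ1 : γ < 1)
    (p : S → A → S × R → ℝ)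
    (hp0 : ∀ s a sr, 0 ≤ p s a sr) (hpsum : ∀ s a, ∑ sr : S × R, p s a sr = 1)
    (pie : S → A → ℝ) (hpie0 : ∀ s a, 0 ≤ pie s a) (hpie1 : ∀ s, ∑ a, pie s a = 1)
    (p1e : S → ℝ) (hp1e0 : ∀ s, 0 ≤ p1e s) (hp1e1 : ∑ s, p1e s = 1)
    (pb : S → ℝ) (hpb0 : ∀ s, 0 ≤ pb s) (hpb1 : ∑ s, pb s = 1)
    (pib : S → A → ℝ) (hpib0 : ∀ s a, 0 ≤ pib s a) (hpib1 : ∀ s, ∑ a, pib s a = 1)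
    (pe : ℕ → S → ℝ)
    (hpe0 : ∀ s, pe 0 s = p1e s)
    (hpeS : ∀ n s', pe (n + 1) s' = ∑ s, ∑ a, pe n s * pie s a * ∑ r : R, p s a (s', r))
    (pinf : S → ℝ) (hpinf : ∀ s, pinf s = (1 - γ) * ∑' n : ℕ, γ ^ n * pe n s)
    (J : ℝ)
    (hJ : J = ∑' n : ℕ, γ ^ n *
        ∑ s, ∑ a, ∑ sr : S × R, pe n s * pie s a * p s a sr * rval sr.2)
    (μ : S → A → ℝ) (hμ : ∀ s a, μ s a = pinf s * pie s a / (pb s * pib s a))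
    (hpos : ∀ s a, 0 < pinf s * pie s a → 0 < pb s * pib s a)
    (Ed : (S → A → S × R → ℝ) → ℝ)
    (hEd : ∀ f, Ed f = ∑ s, ∑ a, ∑ sr : S × R, pb s * pib s a * p s a sr * f s a sr)
    (qhat : S → A → ℝ)
    (Bq : S → A → ℝ)
    (hBq : ∀ s a, Bq s a =
      ∑ sr : S × R, p s a sr * (rval sr.2 + γ * ∑ a', pie sr.1 a' * qhat sr.1 a')) :
    |(∑ s, p1e s * ∑ a, pie s a * qhat s a) - J|
      ≤ (1 - γ)⁻¹ * Real.sqrt (Ed (fun s a _ => μ s a ^ 2))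
          * Real.sqrt (Ed (fun s a _ => (Bq s a - qhat s a) ^ 2)) := by
  have h1γ : (0:ℝ) < 1 - γ := by linarith
  -- local abbreviations, introduced as opaque functions with defining equations
  obtain ⟨ε, hε⟩ : ∃ ε : S → A → ℝ, ∀ s a, ε s a = Bq s a - qhat s a :=
    ⟨_, fun s a => rfl⟩
  obtain ⟨V, hV⟩ : ∃ V : S → ℝ, ∀ s, V s = ∑ a, pie s a * qhat s a :=
    ⟨_, fun s => rfl⟩
  obtain ⟨Vn, hVn⟩ : ∃ Vn : ℕ → ℝ, ∀ n, Vn n = ∑ s, pe n s * V s :=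
    ⟨_, fun n => rfl⟩
  obtain ⟨rn, hrn⟩ : ∃ rn : ℕ → ℝ, ∀ n, rn n =
      ∑ s, ∑ a, ∑ sr : S × R, pe n s * pie s a * p s a sr * rval sr.2 :=
    ⟨_, fun n => rfl⟩
  obtain ⟨en, hen⟩ : ∃ en : ℕ → ℝ, ∀ n, en n = ∑ s, ∑ a, pe n s * pie s a * ε s a :=
    ⟨_, fun n => rfl⟩
  -- basic properties of pe
  have hpe_nonneg : ∀ n s, 0 ≤ pe n s := by
    intro n
    induction n with
    | zero => intro s; rw [hpe0]; exact hp1e0 s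
    | succ n ih =>
      intro s'
      rw [hpeS]
      refine Finset.sum_nonneg fun s _ => Finset.sum_nonneg fun a _ => ?_
      exact mul_nonneg (mul_nonneg (ih s) (hpie0 s a))
        (Finset.sum_nonneg fun r _ => hp0 s a (s', r))
  have hpsum' : ∀ s a, ∑ s' : S, ∑ r : R, p s a (s', r) = 1 := by
    intro s a
    rw [← hpsum s a, Fintype.sum_prod_type]
  have hpe_sum : ∀ n, ∑ s, pe n s = 1 := by
    intro n
    induction n with
    | zero => simp only [hpe0]; exact hp1e1
    | succ n ih =>
      simp only [hpeS]
      rw [Finset.sum_comm]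
      calc ∑ s, ∑ s', ∑ a, pe n s * pie s a * ∑ r : R, p s a (s', r)
          = ∑ s, ∑ a, pe n s * pie s a * ∑ s', ∑ r : R, p s a (s', r) := by
            refine Finset.sum_congr rfl fun s _ => ?_
            rw [Finset.sum_comm]
            exact Finset.sum_congr rfl fun a _ => by rw [Finset.mul_sum]
        _ = ∑ s, ∑ a, pe n s * pie s a := by
            refine Finset.sum_congr rfl fun s _ => Finset.sum_congr rfl fun a _ => ?_
            rw [hpsum' s a, mul_one]
        _ = ∑ s, pe n s := by
            refine Finset.sum_congr rfl fun s _ => ?_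
            rw [← Finset.mul_sum, hpie1, mul_one]
        _ = 1 := ih
  have hpe_le : ∀ n s, pe n s ≤ 1 := by
    intro n s
    calc pe n s ≤ ∑ t, pe n t :=
          Finset.single_le_sum (fun t _ => hpe_nonneg n t) (Finset.mem_univ s)
      _ = 1 := hpe_sum n
  have hpie_le : ∀ s a, pie s a ≤ 1 := by
    intro s a
    calc pie s a ≤ ∑ a', pie s a' :=
          Finset.single_le_sum (fun a' _ => hpie0 s a') (Finset.mem_univ a)
      _ = 1 := hpie1 s
  -- uniform bounds
  have hCV : ∀ n, |Vn n| ≤ ∑ s, |V s| := by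
    intro n
    rw [hVn]
    calc |∑ s, pe n s * V s| ≤ ∑ s, |pe n s * V s| := Finset.abs_sum_le_sum_abs _ _
      _ ≤ ∑ s, |V s| := by
          refine Finset.sum_le_sum fun s _ => ?_
          rw [abs_mul, abs_of_nonneg (hpe_nonneg n s)]
          exact mul_le_of_le_one_left (abs_nonneg _) (hpe_le n s)
  have hCe : ∀ n, |en n| ≤ ∑ s, ∑ a, |ε s a| := by
    intro n
    rw [hen]
    calc |∑ s, ∑ a, pe n s * pie s a * ε s a|
        ≤ ∑ s, |∑ a, pe n s * pie s a * ε s a| := Finset.abs_sum_le_sum_abs _ _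
      _ ≤ ∑ s, ∑ a, |pe n s * pie s a * ε s a| :=
          Finset.sum_le_sum fun s _ => Finset.abs_sum_le_sum_abs _ _
      _ ≤ ∑ s, ∑ a, |ε s a| := by
          refine Finset.sum_le_sum fun s _ => ?_
          refine Finset.sum_le_sum fun a _ => ?_
          rw [abs_mul, abs_mul, abs_of_nonneg (hpe_nonneg n s), abs_of_nonneg (hpie0 s a)]
          nlinarith [hpe_le n s, hpie_le s a, hpe_nonneg n s, hpie0 s a, abs_nonneg (ε s a),
            mul_nonneg (hpie0 s a) (abs_nonneg (ε s a))]
  have hCr : ∀ n, |rn n| ≤ ∑ _s : S, ∑ _a : A, ∑ sr : S × R, |rval sr.2| := by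
    intro n
    rw [hrn]
    calc |∑ s, ∑ a, ∑ sr : S × R, pe n s * pie s a * p s a sr * rval sr.2|
        ≤ ∑ s, ∑ a, ∑ sr : S × R, |pe n s * pie s a * p s a sr * rval sr.2| := by
          refine (Finset.abs_sum_le_sum_abs _ _).trans (Finset.sum_le_sum fun s _ => ?_)
          refine (Finset.abs_sum_le_sum_abs _ _).trans (Finset.sum_le_sum fun a _ => ?_)
          exact Finset.abs_sum_le_sum_abs _ _
      _ ≤ ∑ _s : S, ∑ _a : A, ∑ sr : S × R, |rval sr.2| := by
          refine Finset.sum_le_sum fun s _ => ?_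
          refine Finset.sum_le_sum fun a _ => ?_
          refine Finset.sum_le_sum fun sr _ => ?_
          have hple : p s a sr ≤ 1 := by
            calc p s a sr ≤ ∑ sr', p s a sr' :=
                  Finset.single_le_sum (fun sr' _ => hp0 s a sr') (Finset.mem_univ sr)
              _ = 1 := hpsum s a
          rw [abs_mul, abs_mul, abs_mul, abs_of_nonneg (hpe_nonneg n s),
            abs_of_nonneg (hpie0 s a), abs_of_nonneg (hp0 s a sr)]
          have hn1 : (0:ℝ) ≤ p s a sr * |rval sr.2| :=
            mul_nonneg (hp0 s a sr) (abs_nonneg (rval sr.2))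
          have hs1 : pie s a * (p s a sr * |rval sr.2|) ≤ p s a sr * |rval sr.2| :=
            mul_le_of_le_one_left hn1 (hpie_le s a)
          have hs2 : p s a sr * |rval sr.2| ≤ |rval sr.2| :=
            mul_le_of_le_one_left (abs_nonneg (rval sr.2)) hple
          nlinarith [hpe_le n s, hpe_nonneg n s, mul_nonneg (hpie0 s a) hn1]
  have hsumV : Summable (fun n => γ ^ n * Vn n) := summable_geom_mul hγ0 hγ1 hCV
  have hsumE : Summable (fun n => γ ^ n * en n) := summable_geom_mul hγ0 hγ1 hCe
  have hsumR : Summable (fun n => γ ^ n * rn n) := summable_geom_mul hγ0 hγ1 hCr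
  have hshift : Summable (fun n => γ ^ n * Vn (n + 1)) :=
    summable_geom_mul hγ0 hγ1 (fun n => hCV (n + 1))
  -- Bellman expansion: en n = rn n + γ * Vn (n+1) - Vn n
  have hbellman : ∀ n, en n = rn n + γ * Vn (n + 1) - Vn n := by
    intro n
    have hq : ∀ s a, pe n s * pie s a * ε s a
        = (∑ sr : S × R, pe n s * pie s a * p s a sr * rval sr.2)
          + γ * (∑ sr : S × R, pe n s * pie s a * p s a sr * V sr.1)
          - pe n s * pie s a * qhat s a := by
      intro s a
      have hBq' : Bq s a = ∑ sr : S × R, p s a sr * (rval sr.2 + γ * V sr.1) := by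
        rw [hBq]
        exact Finset.sum_congr rfl fun sr _ => by rw [hV]
      have h0 : pe n s * pie s a * ε s a
          = pe n s * pie s a * Bq s a - pe n s * pie s a * qhat s a := by
        rw [hε]; ring
      rw [h0, hBq', Finset.mul_sum]
      have h1 : ∑ sr : S × R, pe n s * pie s a * (p s a sr * (rval sr.2 + γ * V sr.1))
          = ∑ sr : S × R, (pe n s * pie s a * p s a sr * rval sr.2
              + γ * (pe n s * pie s a * p s a sr * V sr.1)) :=
        Finset.sum_congr rfl fun sr _ => by ring
      rw [h1, Finset.sum_add_distrib, ← Finset.mul_sum]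
    have h3 : ∑ s, ∑ a, pe n s * pie s a * qhat s a = Vn n := by
      rw [hVn]
      refine Finset.sum_congr rfl fun s _ => ?_
      rw [hV, Finset.mul_sum]
      exact Finset.sum_congr rfl fun a _ => by ring
    have h4 : ∑ s, ∑ a, ∑ sr : S × R, pe n s * pie s a * p s a sr * V sr.1 = Vn (n + 1) := by
      calc ∑ s, ∑ a, ∑ sr : S × R, pe n s * pie s a * p s a sr * V sr.1
          = ∑ s, ∑ a, ∑ s', ∑ r : R, pe n s * pie s a * p s a (s', r) * V s' := by
            exact Finset.sum_congr rfl fun s _ => Finset.sum_congr rfl fun a _ => by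
              rw [Fintype.sum_prod_type]
        _ = ∑ s, ∑ a, ∑ s', (pe n s * pie s a * ∑ r : R, p s a (s', r)) * V s' := by
            refine Finset.sum_congr rfl fun s _ => Finset.sum_congr rfl fun a _ =>
              Finset.sum_congr rfl fun s' _ => ?_
            rw [Finset.mul_sum, Finset.sum_mul]
        _ = ∑ s, ∑ s', ∑ a, (pe n s * pie s a * ∑ r : R, p s a (s', r)) * V s' :=
            Finset.sum_congr rfl fun s _ => Finset.sum_comm
        _ = ∑ s', ∑ s, ∑ a, (pe n s * pie s a * ∑ r : R, p s a (s', r)) * V s' :=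
            Finset.sum_comm
        _ = ∑ s', (∑ s, ∑ a, pe n s * pie s a * ∑ r : R, p s a (s', r)) * V s' := by
            refine Finset.sum_congr rfl fun s' _ => ?_
            rw [Finset.sum_mul]
            exact Finset.sum_congr rfl fun s _ => (Finset.sum_mul _ _ _).symm
        _ = ∑ s', pe (n + 1) s' * V s' := by
            exact Finset.sum_congr rfl fun s' _ => by rw [← hpeS]
        _ = Vn (n + 1) := (hVn (n + 1)).symm
    calc en n = ∑ s, ∑ a, pe n s * pie s a * ε s a := hen n
      _ = (∑ s, ∑ a, ∑ sr : S × R, pe n s * pie s a * p s a sr * rval sr.2)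
          + γ * (∑ s, ∑ a, ∑ sr : S × R, pe n s * pie s a * p s a sr * V sr.1)
          - ∑ s, ∑ a, pe n s * pie s a * qhat s a := by
          simp only [hq]
          simp only [Finset.sum_add_distrib, Finset.sum_sub_distrib, ← Finset.mul_sum]
      _ = rn n + γ * Vn (n + 1) - Vn n := by rw [← hrn, h3, h4]
  -- tsum telescoping identity
  have htel : ∑' n, γ ^ n * en n = J - Vn 0 := by
    have hfun : (fun n => γ ^ n * en n)
        = fun n => (γ ^ n * rn n + γ * (γ ^ n * Vn (n + 1))) - γ ^ n * Vn n :=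
      funext fun n => by rw [hbellman n]; ring
    have h5 : HasSum (fun n => γ ^ n * en n)
        (((∑' n, γ ^ n * rn n) + γ * ∑' n, γ ^ n * Vn (n + 1)) - ∑' n, γ ^ n * Vn n) := by
      rw [hfun]
      exact ((hsumR.hasSum.add (hshift.hasSum.mul_left γ)).sub hsumV.hasSum)
    rw [h5.tsum_eq]
    have hJ' : ∑' n, γ ^ n * rn n = J := by
      rw [hJ]
      exact tsum_congr fun n => by rw [hrn]
    have hsh : γ * ∑' n, γ ^ n * Vn (n + 1) = (∑' n, γ ^ n * Vn n) - Vn 0 := by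
      have h6 : γ * ∑' n, γ ^ n * Vn (n + 1) = ∑' n, γ ^ (n + 1) * Vn (n + 1) := by
        rw [← tsum_mul_left]
        exact tsum_congr fun n => by ring
      have h7 := Summable.tsum_eq_zero_add hsumV
      simp only [pow_zero, one_mul] at h7
      rw [h6]
      linarith
    rw [hJ', hsh]
    ring
  -- key change-of-measure sum identity
  have hsum_sa : ∀ s a, Summable (fun n => γ ^ n * (pe n s * pie s a * ε s a)) := by
    intro s a
    refine summable_geom_mul hγ0 hγ1 (C := |pie s a * ε s a|) fun n => ?_
    rw [show pe n s * pie s a * ε s a = pe n s * (pie s a * ε s a) from by ring,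
      abs_mul, abs_of_nonneg (hpe_nonneg n s)]
    exact mul_le_of_le_one_left (abs_nonneg _) (hpe_le n s)
  have hkey : ∑ s, ∑ a, pinf s * pie s a * ε s a = (1 - γ) * ∑' n, γ ^ n * en n := by
    calc ∑ s, ∑ a, pinf s * pie s a * ε s a
        = ∑ s, ∑ a, (1 - γ) * ∑' n, γ ^ n * (pe n s * pie s a * ε s a) := by
          refine Finset.sum_congr rfl fun s _ => Finset.sum_congr rfl fun a _ => ?_
          have h8 : ∑' n, γ ^ n * (pe n s * pie s a * ε s a)
              = (∑' n, γ ^ n * pe n s) * (pie s a * ε s a) := by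
            rw [← tsum_mul_right]
            exact tsum_congr fun n => by ring
          rw [h8, hpinf]
          ring
      _ = (1 - γ) * ∑ s, ∑ a, ∑' n, γ ^ n * (pe n s * pie s a * ε s a) := by
          rw [Finset.mul_sum]
          exact Finset.sum_congr rfl fun s _ => by rw [Finset.mul_sum]
      _ = (1 - γ) * ∑ s, ∑' n, ∑ a, γ ^ n * (pe n s * pie s a * ε s a) := by
          congr 1
          exact Finset.sum_congr rfl fun s _ => (Summable.tsum_finsetSum fun a _ => hsum_sa s a).symm
      _ = (1 - γ) * ∑' n, ∑ s, ∑ a, γ ^ n * (pe n s * pie s a * ε s a) := by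
          congr 1
          exact (Summable.tsum_finsetSum fun s _ => summable_sum fun a _ => hsum_sa s a).symm
      _ = (1 - γ) * ∑' n, γ ^ n * en n := by
          congr 1
          refine tsum_congr fun n => ?_
          rw [hen, Finset.mul_sum]
          exact Finset.sum_congr rfl fun s _ => by rw [Finset.mul_sum]
  -- direct-method error identity
  have hVn0 : ∑ s, p1e s * ∑ a, pie s a * qhat s a = Vn 0 := by
    rw [hVn]
    refine Finset.sum_congr rfl fun s _ => ?_
    rw [hpe0, hV]
  have herr : (∑ s, p1e s * ∑ a, pie s a * qhat s a) - J
      = -((1 - γ)⁻¹ * ∑ s, ∑ a, pinf s * pie s a * ε s a) := by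
    rw [hVn0, hkey, htel]
    field_simp
    ring
  -- pointwise change of measure
  have hpinf_nonneg : ∀ s, 0 ≤ pinf s := by
    intro s
    rw [hpinf]
    refine mul_nonneg h1γ.le (tsum_nonneg fun n => ?_)
    exact mul_nonneg (pow_nonneg hγ0 n) (hpe_nonneg n s)
  have hcm : ∀ s a, pinf s * pie s a * ε s a = (pb s * pib s a) * μ s a * ε s a := by
    intro s a
    by_cases h : pb s * pib s a = 0
    · have h0 : pinf s * pie s a = 0 := by
        by_contra hne
        have hpos' : 0 < pinf s * pie s a :=
          lt_of_le_of_ne (mul_nonneg (hpinf_nonneg s) (hpie0 s a)) (Ne.symm hne)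
        have := hpos s a hpos'
        rw [h] at this
        exact lt_irrefl 0 this
      rw [h0, h]; ring
    · rw [hμ]
      field_simp
      rw [eq_div_iff h]; ring
  -- expectations under pb
  have hEd_const : ∀ c : S → A → ℝ,
      Ed (fun s a _ => c s a) = ∑ s, ∑ a, pb s * pib s a * c s a := by
    intro c
    rw [hEd]
    refine Finset.sum_congr rfl fun s _ => Finset.sum_congr rfl fun a _ => ?_
    calc ∑ sr : S × R, pb s * pib s a * p s a sr * c s a
        = pb s * pib s a * c s a * ∑ sr : S × R, p s a sr := by
          rw [Finset.mul_sum]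
          exact Finset.sum_congr rfl fun sr _ => by ring
      _ = pb s * pib s a * c s a := by rw [hpsum, mul_one]
  -- Cauchy–Schwarz
  have hcs : |∑ s, ∑ a, (pb s * pib s a) * μ s a * ε s a|
      ≤ Real.sqrt (∑ s, ∑ a, pb s * pib s a * μ s a ^ 2)
        * Real.sqrt (∑ s, ∑ a, pb s * pib s a * ε s a ^ 2) := by
    have h := weighted_cs (ι := S × A) (fun i => pb i.1 * pib i.1 i.2)
      (fun i => μ i.1 i.2) (fun i => ε i.1 i.2)
      (fun i => mul_nonneg (hpb0 i.1) (hpib0 i.1 i.2))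
    simpa only [Fintype.sum_prod_type] using h
  -- assemble
  have hεgoal : ∀ s a, (Bq s a - qhat s a) ^ 2 = ε s a ^ 2 :=
    fun s a => by rw [hε]
  calc |(∑ s, p1e s * ∑ a, pie s a * qhat s a) - J|
      = (1 - γ)⁻¹ * |∑ s, ∑ a, (pb s * pib s a) * μ s a * ε s a| := by
        rw [herr, abs_neg, abs_mul, abs_of_nonneg (inv_nonneg.2 h1γ.le)]
        congr 2
        exact Finset.sum_congr rfl fun s _ => Finset.sum_congr rfl fun a _ => hcm s a
    _ ≤ (1 - γ)⁻¹ * (Real.sqrt (∑ s, ∑ a, pb s * pib s a * μ s a ^ 2)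
          * Real.sqrt (∑ s, ∑ a, pb s * pib s a * ε s a ^ 2)) :=
        mul_le_mul_of_nonneg_left hcs (inv_nonneg.2 h1γ.le)
    _ = (1 - γ)⁻¹ * Real.sqrt (Ed (fun s a _ => μ s a ^ 2))
          * Real.sqrt (Ed (fun s a _ => (Bq s a - qhat s a) ^ 2)) := by
        rw [hEd_const, hEd_const, mul_assoc]
        congr 3
        exact Finset.sum_congr rfl fun s _ => Finset.sum_congr rfl fun a _ => by
          rw [hεgoal]
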